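/- Let V be a type, d : V → V → ℝ satisfy the directed triangle inequality, and R be a finite set of vertices. Fix v ∈ V and suppose u ∈ V satisfies, for all r ∈ R, the inequality 2·d(v,r) + d(r,u) > 2·d(v,u) + d(u,r) (i.e., u ∈ B²_out(v)). Then every vertex x on a shortest path from v to u also lies in B²_out(v); formally, if x ∈ V satisfies d(v,u) = d(v,x) + d(x,u), then for all r ∈ R, 2·d(v,r) + d(r,x) > 2·d(v,x) + d(x,r). -/
import Mathlib


/-- Closedness of `B²_out(v)` (Claim 5.4): if `u ∈ B²_out(v)` and `x` lies on a
shortest path from `v` to `u`, then `x ∈ B²_out(v)`. -/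
theorem b2_closed_under_shortest_path {V : Type*} (d : V → V → ℝ)
    (htri : ∀ a b c : V, d a c ≤ d a b + d b c)
    (R : Finset V) (v u : V)
    (hu : ∀ r ∈ R, 2 * d v r + d r u > 2 * d v u + d u r)
    (x : V) (hx : d v u = d v x + d x u) :
    ∀ r ∈ R, 2 * d v r + d r x > 2 * d v x + d x r := by
  intro r hr
  have h1 := htri r x u
  have h2 := htri x u r
  have h3 := hu r hr
  linarith
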